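/- arXiv:1601.05830 — 5 statements merged into one kernel-verified Lean document; each statement's English description precedes it below -/
import Mathlib

section
/- Let R be a ring with a rigid endomorphism α. If a, b ∈ R satisfy a·b = 0, then a·αⁿ(b) = 0 and αⁿ(a)·b = 0 for every natural number n ≥ 1. -/
theorem rigid_zero_prod_iterate {R : Type*} [Ring R] (α : R →+* R)
    (hrigid : ∀ a : R, a * α a = 0 → a = 0)
    (a b : R) (hab : a * b = 0) :
    ∀ n : ℕ, 1 ≤ n → a * (α^[n] b) = 0 ∧ (α^[n] a) * b = 0 := by
  -- R is reduced
  have hred : ∀ x : R, x * x = 0 → x = 0 := by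
    intro x hx
    apply hrigid
    apply hrigid
    have h2 : α x * α x = 0 := by rw [← map_mul, hx, map_zero]
    calc x * α x * α (x * α x) = x * (α x * α x * α (α x)) := by
          rw [map_mul]; noncomm_ring
      _ = 0 := by rw [h2, zero_mul, mul_zero]
  -- zero products commute
  have hcomm : ∀ x y : R, x * y = 0 → y * x = 0 := by
    intro x y hxy
    apply hred
    calc y * x * (y * x) = y * (x * y) * x := by noncomm_ring
      _ = 0 := by rw [hxy, mul_zero, zero_mul]
  -- one-step lemmas
  have hleft : ∀ x y : R, x * y = 0 → α x * y = 0 := by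
    intro x y hxy
    apply hcomm
    apply hrigid
    have h2 : α x * α y = 0 := by rw [← map_mul, hxy, map_zero]
    calc y * α x * α (y * α x) = y * (α x * α y) * α (α x) := by
          rw [map_mul]; noncomm_ring
      _ = 0 := by rw [h2, mul_zero, zero_mul]
  have hright : ∀ x y : R, x * y = 0 → x * α y = 0 := by
    intro x y hxy
    exact hcomm _ _ (hleft y x (hcomm _ _ hxy))
  intro n hn
  induction n with
  | zero => omega
  | succ m ih =>
    rcases Nat.eq_zero_or_pos m with hm | hm
    · subst hm
      rw [show (0:ℕ)+1 = 1 from rfl, Function.iterate_one]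
      exact ⟨hright a b hab, hleft a b hab⟩
    · obtain ⟨h1, h2⟩ := ih hm
      rw [Function.iterate_succ_apply', Function.iterate_succ_apply']
      exact ⟨hright _ _ h1, hleft _ _ h2⟩
end

section
/- Let R be a ring with a rigid endomorphism α. If a, b ∈ R and there exists a positive integer k with a·αᵏ(b) = 0, then a·b = 0. -/
theorem rigid_zero_prod_of_iterate {R : Type*} [Ring R] (α : R →+* R)
    (hrigid : ∀ a : R, a * α a = 0 → a = 0)
    (a b : R) (k : ℕ) (hk : 1 ≤ k) (h : a * (α^[k] b) = 0) :
    a * b = 0 := by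
  -- R is reduced
  have hred : ∀ x : R, x * x = 0 → x = 0 := by
    intro x hx
    have h1 : (x * α x) * α (x * α x) = 0 := by
      have : (x * α x) * α (x * α x) = x * (α x * α x) * α (α x) := by
        rw [map_mul]; simp [mul_assoc]
      rw [this, ← map_mul, hx, map_zero, mul_zero, zero_mul]
    exact hrigid x (hrigid _ h1)
  have hcomm : ∀ x y : R, x * y = 0 → y * x = 0 := by
    intro x y hxy
    apply hred
    calc y * x * (y * x) = y * (x * y) * x := by simp [mul_assoc]
      _ = 0 := by rw [hxy, mul_zero, zero_mul]
  have key : ∀ x c : R, x * α c = 0 → x * c = 0 := by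
    intro x c hxc
    apply hcomm
    apply hrigid
    calc c * x * α (c * x) = c * (x * α c) * α x := by rw [map_mul]; simp [mul_assoc]
      _ = 0 := by rw [hxc, mul_zero, zero_mul]
  clear hk
  induction k with
  | zero => exact h
  | succ n ih =>
      apply ih
      rw [Function.iterate_succ_apply'] at h
      exact key a _ h
end

section
/- Let R be a ring with a rigid endomorphism α, and suppose α(a·b) = 0 for some a, b ∈ R. Then α(α(a))·α(b) = 0. -/
theorem rigid_lemma_kav {R : Type*} [Ring R] (α : R →+* R)
    (hrigid : ∀ a : R, a * α a = 0 → a = 0)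
    (a b : R) (h : α (a * b) = 0) :
    α (α a) * α b = 0 := by
  -- Lemma: u * v = 0 → v * α u = 0
  have L : ∀ u v : R, u * v = 0 → v * α u = 0 := by
    intro u v huv
    apply hrigid
    have : v * α u * (α v * α (α u)) = v * (α (u * v)) * α (α u) := by
      rw [map_mul]; simp [mul_assoc]
    rw [map_mul]
    rw [this, huv, map_zero, mul_zero, zero_mul]
  -- Reduced: c * c = 0 → c = 0
  have Red : ∀ c : R, c * c = 0 → c = 0 := fun c hc => hrigid c (L c c hc)
  have h1 : α a * α b = 0 := by rw [← map_mul, h]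
  have h2 : α b * α (α a) = 0 := L _ _ h1
  apply Red
  calc α (α a) * α b * (α (α a) * α b)
      = α (α a) * (α b * α (α a)) * α b := by simp [mul_assoc]
    _ = 0 := by rw [h2, mul_zero, zero_mul]
end

section
/- Let R be a domain (a nonzero ring without zero divisors, not necessarily commutative). Then R satisfies the ascending chain condition on principal left ideals if and only if for every sequence (rₙ) of nonunits of R, the intersection over all n of the right ideals r₁r₂⋯rₙR is zero. -/
/-- The principal left ideal `Ra` as a set. -/
def principalLeft {R : Type*} [Ring R] (a : R) : Set R := Set.range (fun r : R => r * a)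

lemma pl_mono {R : Type*} [Ring R] {a b s : R} (h : a = s * b) :
    principalLeft a ⊆ principalLeft b := by
  rintro x ⟨r, rfl⟩
  exact ⟨r * s, by simp [h, mul_assoc]⟩

lemma mem_pl_self {R : Type*} [Ring R] (a : R) : a ∈ principalLeft a := ⟨1, one_mul a⟩

lemma isUnit_of_right_inv {R : Type*} [Ring R] [IsDomain R] {a b : R} (h : a * b = 1) :
    IsUnit a := by
  have ha : a ≠ 0 := by rintro rfl; rw [zero_mul] at h; exact zero_ne_one h
  have hba : b * a = 1 := by
    have h2 : a * (b * a) = a * 1 := by rw [← mul_assoc, h, one_mul, mul_one]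
    exact mul_left_cancel₀ ha h2
  exact ⟨⟨a, b, h, hba⟩, rfl⟩

theorem accpl_iff_archimedean_sequences {R : Type*} [Ring R] [IsDomain R] :
    (¬ ∃ a : ℕ → R, ∀ n, principalLeft (a n) ⊂ principalLeft (a (n + 1))) ↔
    (∀ r : ℕ → R, (∀ n, ¬ IsUnit (r n)) →
      (⋂ n : ℕ, Set.range (fun t : R => ((List.range (n + 1)).map r).prod * t)) = {0}) := by
  constructor
  · intro hacc r hr
    ext x
    simp only [Set.mem_iInter, Set.mem_range, Set.mem_singleton_iff]
    constructor
    · intro hx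
      by_contra hx0
      choose t ht using hx
      have hPsucc : ∀ n : ℕ, ((List.range (n + 2)).map r).prod
          = ((List.range (n + 1)).map r).prod * r (n + 1) := by
        intro n
        rw [List.range_succ (n := n + 1), List.map_append, List.prod_append]
        simp
      have hPne : ∀ n : ℕ, ((List.range (n + 1)).map r).prod ≠ 0 := by
        intro n h0
        exact hx0 (by rw [← ht n, h0, zero_mul])
      have hstep : ∀ n, t n = r (n + 1) * t (n + 1) := by
        intro n
        apply mul_left_cancel₀ (hPne n)
        rw [ht n, ← mul_assoc, ← hPsucc n, ht (n + 1)]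
      have htne : ∀ n, t n ≠ 0 := by
        intro n h0
        exact hx0 (by rw [← ht n, h0, mul_zero])
      apply hacc
      refine ⟨t, fun n => ⟨pl_mono (hstep n), ?_⟩⟩
      intro hsub
      obtain ⟨u, hu⟩ := hsub (mem_pl_self (t (n + 1)))
      have hu' : u * t n = t (n + 1) := hu
      have h2 : (1 : R) * t n = (r (n + 1) * u) * t n := by
        rw [one_mul, mul_assoc, hu', ← hstep n]
      have h1 : r (n + 1) * u = 1 := (mul_right_cancel₀ (htne n) h2).symm
      exact hr (n + 1) (isUnit_of_right_inv h1)
    · rintro rfl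
      intro n
      exact ⟨0, mul_zero _⟩
  · intro h
    rintro ⟨a, ha⟩
    have hs : ∀ n, ∃ s, a n = s * a (n + 1) ∧ ¬ IsUnit s := by
      intro n
      obtain ⟨s, hsn0⟩ := (ha n).1 (mem_pl_self (a n))
      have hsn : s * a (n + 1) = a n := hsn0
      refine ⟨s, hsn.symm, ?_⟩
      intro hu
      apply (ha n).2
      rintro x ⟨v, rfl⟩
      obtain ⟨u, rfl⟩ := hu
      have h2 : a (n + 1) = ↑u⁻¹ * a n := by
        rw [← hsn, ← mul_assoc, Units.inv_mul, one_mul]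
      show v * a (n + 1) ∈ principalLeft (a n)
      exact ⟨v * ↑u⁻¹, by show v * ↑u⁻¹ * a n = v * a (n + 1); rw [mul_assoc, ← h2]⟩
    choose s hseq hsu using hs
    have ha1 : a 1 ≠ 0 := by
      intro h0
      apply (ha 0).2
      rintro x ⟨v, rfl⟩
      show v * a 1 ∈ principalLeft (a 0)
      rw [h0, mul_zero]
      exact ⟨0, zero_mul _⟩
    have key := h (fun n => s (n + 1)) (fun n => hsu (n + 1))
    have hchain : ∀ n : ℕ,
        a 1 = ((List.range (n + 1)).map (fun k => s (k + 1))).prod * a (n + 2) := by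
      intro n
      induction n with
      | zero => simpa [List.range_succ] using hseq 1
      | succ k ih =>
        rw [List.range_succ (n := k + 1), List.map_append, List.prod_append]
        simp only [List.map_cons, List.map_nil, List.prod_cons, List.prod_nil, mul_one]
        rw [mul_assoc, ← hseq (k + 2)]
        exact ih
    have hmem : a 1 ∈ ⋂ n : ℕ,
        Set.range (fun t : R => ((List.range (n + 1)).map (fun k => s (k + 1))).prod * t) := by
      rw [Set.mem_iInter]
      intro n
      exact ⟨a (n + 2), (hchain n).symm⟩
    rw [key] at hmem
    exact ha1 hmem
end

section
/- Let k be a field and R = k[x₁, x₂, …]/(x₁², x₂², …), the polynomial ring in countably many commuting variables modulo the squares of the variables. Then R satisfies the ascending chain condition on principal ideals. -/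
set_option maxHeartbeats 1000000
set_option synthInstance.maxHeartbeats 400000

open MvPolynomial
open scoped Pointwise

namespace QSAux

variable {k : Type*} [Field k]

/-- The ideal of squares of variables. -/
noncomputable abbrev II (k : Type*) [Field k] : Ideal (MvPolynomial ℕ k) :=
  Ideal.span (Set.range fun i : ℕ => (MvPolynomial.X i : MvPolynomial ℕ k) ^ 2)

/-- squarefree exponent vector -/
def SF (d : ℕ →₀ ℕ) : Prop := ∀ i, d i ≤ 1

noncomputable instance : DecidablePred SF := fun _ => Classical.dec _

/-- minimal degree of a squarefree monomial occurring in `p` -/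
noncomputable def Dsf (p : MvPolynomial ℕ k) : ℕ∞ :=
  (p.support.filter SF).inf fun d => (d.degree : ℕ∞)

lemma degree_add (a b : ℕ →₀ ℕ) : (a + b).degree = a.degree + b.degree := by
  simp [Finsupp.degree_eq_weight_one, map_add]

/-- the "all monomials non-squarefree" ideal -/
def J (k : Type*) [Field k] : Ideal (MvPolynomial ℕ k) where
  carrier := {p | ∀ d ∈ p.support, ¬ SF d}
  zero_mem' := by simp
  add_mem' := by
    intro a b ha hb d hd
    rcases Finset.mem_union.mp (MvPolynomial.support_add hd) with h | h
    · exact ha d h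
    · exact hb d h
  smul_mem' := by
    intro c x hx d hd hsf
    rw [smul_eq_mul] at hd
    obtain ⟨d1, h1, d2, h2, rfl⟩ := Finset.mem_add.mp (MvPolynomial.support_mul c x hd)
    exact hx d2 h2 fun i => le_trans (Nat.le_add_left _ _) (hsf i)

lemma notSF_of_mem {p : MvPolynomial ℕ k} (hp : p ∈ II k) :
    ∀ d ∈ p.support, ¬ SF d := by
  classical
  have hJ : II k ≤ J k := by
    rw [Ideal.span_le]
    rintro _ ⟨i, rfl⟩ d hd hsf
    have hd' : d ∈ ((X i ^ 2 : MvPolynomial ℕ k)).support := hd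
    rw [X_pow_eq_monomial, support_monomial, if_neg (one_ne_zero)] at hd'
    rw [Finset.mem_singleton] at hd'
    subst hd'
    have := hsf i
    simp [Finsupp.single_apply] at this
  exact hJ hp

lemma mem_of_notSF {p : MvPolynomial ℕ k} (hp : ∀ d ∈ p.support, ¬ SF d) : p ∈ II k := by
  rw [← p.support_sum_monomial_coeff]
  refine Ideal.sum_mem _ fun d hd => ?_
  obtain ⟨i, hi⟩ : ∃ i, 2 ≤ d i := by
    have h2 := hp d hd
    unfold SF at h2
    push_neg at h2
    obtain ⟨i, hi⟩ := h2
    exact ⟨i, hi⟩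
  have key : (monomial d) (coeff d p) =
      (X i ^ 2) * monomial (d - Finsupp.single i 2) (coeff d p) := by
    rw [X_pow_eq_monomial, monomial_mul, one_mul]
    congr 1
    rw [add_tsub_cancel_of_le (Finsupp.single_le_iff.mpr hi)]
  rw [key]
  exact Ideal.mul_mem_right _ _ (Ideal.subset_span ⟨i, rfl⟩)

lemma Dsf_eq_of_sub_mem {p q : MvPolynomial ℕ k} (h : p - q ∈ II k) : Dsf p = Dsf q := by
  have hco : ∀ d, SF d → coeff d p = coeff d q := by
    intro d hd
    by_contra hne
    have hmem : d ∈ (p - q).support := by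
      rw [MvPolynomial.mem_support_iff, coeff_sub]
      exact sub_ne_zero_of_ne hne
    exact notSF_of_mem h d hmem hd
  have hs : p.support.filter SF = q.support.filter SF := by
    ext d
    simp only [Finset.mem_filter, MvPolynomial.mem_support_iff]
    constructor
    · rintro ⟨h1, h2⟩; rw [hco d h2] at h1; exact ⟨h1, h2⟩
    · rintro ⟨h1, h2⟩; rw [← hco d h2] at h1; exact ⟨h1, h2⟩
  unfold Dsf
  rw [hs]

lemma Dsf_lt_top {p : MvPolynomial ℕ k} (hp : p ∉ II k) : Dsf p < ⊤ := by
  have hne : (p.support.filter SF).Nonempty := by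
    rw [Finset.filter_nonempty_iff]
    by_contra hempty
    push_neg at hempty
    exact hp (mem_of_notSF hempty)
  obtain ⟨d, hd⟩ := hne
  exact lt_of_le_of_lt (Finset.inf_le hd) (WithTop.coe_lt_top _)

lemma isUnit_of_constantCoeff {r : MvPolynomial ℕ k} (h : coeff 0 r ≠ 0) :
    IsUnit (Ideal.Quotient.mk (II k) r) := by
  classical
  have hnil : IsNilpotent (Ideal.Quotient.mk (II k) (r - C (coeff 0 r))) := by
    have hrepr := MvPolynomial.support_sum_monomial_coeff (r - C (coeff 0 r))
    rw [← hrepr, map_sum]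
    apply isNilpotent_sum
    intro d hd
    refine ⟨2, ?_⟩
    rw [← map_pow, Ideal.Quotient.eq_zero_iff_mem]
    apply mem_of_notSF
    intro e he hsf
    rw [monomial_pow] at he
    have he' : e ∈ (monomial (2 • d) (coeff d (r - C (coeff 0 r)) ^ 2)).support := he
    rw [support_monomial] at he'
    have hdne : d ≠ 0 := by
      rintro rfl
      rw [MvPolynomial.mem_support_iff, coeff_sub, coeff_zero_C] at hd
      simp at hd
    have hz : coeff d (r - C (coeff 0 r)) ^ 2 ≠ 0 :=
      pow_ne_zero _ (MvPolynomial.mem_support_iff.mp hd)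
    rw [if_neg hz, Finset.mem_singleton] at he'
    subst he'
    obtain ⟨i, hi⟩ : ∃ i, 1 ≤ d i := by
      by_contra hno
      push_neg at hno
      exact hdne (Finsupp.ext fun i => Nat.lt_one_iff.mp (hno i))
    have := hsf i
    simp only [Finsupp.smul_apply, smul_eq_mul] at this
    omega
  have hu : IsUnit (Ideal.Quotient.mk (II k) (C (coeff 0 r))) :=
    ((isUnit_iff_ne_zero.mpr h).map (C : k →+* MvPolynomial ℕ k)).map _
  have hsplit : C (coeff 0 r) + (r - C (coeff 0 r)) = r := by ring
  rw [← hsplit, map_add]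
  exact hnil.isUnit_add_left_of_commute hu (Commute.all _ _)

lemma Dsf_mul {q r : MvPolynomial ℕ k} (h : coeff 0 r = 0) :
    Dsf q + 1 ≤ Dsf (q * r) := by
  apply Finset.le_inf
  intro d hd
  rw [Finset.mem_filter] at hd
  obtain ⟨hd1, hd2⟩ := hd
  obtain ⟨d1, h1, d2, h2, rfl⟩ := Finset.mem_add.mp (MvPolynomial.support_mul q r hd1)
  have hd1sf : SF d1 := fun i => le_trans (Nat.le_add_right _ _) (hd2 i)
  have hdeg : Dsf q ≤ (d1.degree : ℕ∞) :=
    Finset.inf_le (Finset.mem_filter.mpr ⟨h1, hd1sf⟩)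
  have hd2ne : d2 ≠ 0 := by
    rintro rfl
    exact (MvPolynomial.mem_support_iff.mp h2) h
  have h1le : 1 ≤ d2.degree :=
    Nat.one_le_iff_ne_zero.mpr fun h0 => hd2ne ((Finsupp.degree_eq_zero_iff _).mp h0)
  calc Dsf q + 1 ≤ (d1.degree : ℕ∞) + (d2.degree : ℕ∞) :=
        add_le_add hdeg (by exact_mod_cast h1le)
    _ = (((d1 + d2).degree : ℕ) : ℕ∞) := by rw [degree_add]; push_cast; ring

end QSAux

open QSAux in
theorem quotient_squares_accp (k : Type*) [Field k] :
    ¬ ∃ f : ℕ → (MvPolynomial ℕ k ⧸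
        Ideal.span (Set.range fun i : ℕ => (MvPolynomial.X i : MvPolynomial ℕ k) ^ 2)),
      ∀ n, Ideal.span {f n} < Ideal.span {f (n + 1)} := by
  rintro ⟨f, hf⟩
  have hne : ∀ n, f (n + 1) ≠ 0 := by
    intro n h
    have hlt := hf n
    rw [h, Set.singleton_zero, Ideal.span_zero] at hlt
    exact not_lt_bot hlt
  have hdvd : ∀ n, ∃ c, f (n + 1) = f (n + 2) * c ∧ ¬ IsUnit c := by
    intro n
    have hmem : f (n + 1) ∈ Ideal.span {f (n + 2)} :=
      (hf (n + 1)).le (Ideal.mem_span_singleton_self _)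
    obtain ⟨c, hc⟩ := Ideal.mem_span_singleton.mp hmem
    refine ⟨c, hc, fun hcu => ?_⟩
    have h2 : c * ↑hcu.unit⁻¹ = 1 := hcu.mul_val_inv
    have h3 : f (n + 2) = f (n + 1) * ↑hcu.unit⁻¹ := by
      rw [hc, mul_assoc, h2, mul_one]
    exact (hf (n + 1)).not_ge
      (Ideal.span_singleton_le_span_singleton.mpr ⟨↑hcu.unit⁻¹, h3⟩)
  choose c hc hcnu using hdvd
  choose q hq using fun n => Ideal.Quotient.mk_surjective (I := II k) (f (n + 1))
  choose r hr using fun n => Ideal.Quotient.mk_surjective (I := II k) (c n)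
  have hr0 : ∀ n, coeff 0 (r n) = 0 := by
    intro n
    by_contra h0
    exact hcnu n (hr n ▸ isUnit_of_constantCoeff h0)
  have hkey : ∀ n, Dsf (q (n + 1)) + 1 ≤ Dsf (q n) := by
    intro n
    have heq : Ideal.Quotient.mk (II k) (q n) =
        Ideal.Quotient.mk (II k) (q (n + 1) * r n) := by
      rw [map_mul, hq, hq, hr]
      exact hc n
    have heq2 := Dsf_eq_of_sub_mem (p := q n) (q := q (n + 1) * r n)
      ((Ideal.Quotient.eq).mp heq)
    rw [heq2]
    exact Dsf_mul (hr0 n)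
  have hfin : ∀ n, Dsf (q n) < ⊤ := by
    intro n
    apply Dsf_lt_top
    intro hmem
    apply hne n
    rw [← hq n, Ideal.Quotient.eq_zero_iff_mem]
    exact hmem
  set g : ℕ → ℕ := fun n => (Dsf (q n)).toNat with hg
  have hstep : ∀ n, g (n + 1) + 1 ≤ g n := by
    intro n
    have h1 := hkey n
    have e1 : ((g (n + 1) : ℕ) : ℕ∞) = Dsf (q (n + 1)) := ENat.coe_toNat (hfin (n + 1)).ne
    have e2 : ((g n : ℕ) : ℕ∞) = Dsf (q n) := ENat.coe_toNat (hfin n).ne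
    have h4 : ((g (n + 1) : ℕ) : ℕ∞) + 1 ≤ ((g n : ℕ) : ℕ∞) := by
      rw [e1, e2]; exact h1
    exact_mod_cast h4
  have hbound : ∀ n, g n + n ≤ g 0 := by
    intro n
    induction n with
    | zero => simp
    | succ m ih =>
      have := hstep m
      omega
  have := hbound (g 0 + 1)
  omega
end
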